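/- Let D be a finite simple digraph and let C_1, …, C_p be the vertex sets of its strongly connected components. Then OLA(D) = OLA(D[C_1]) + OLA(D[C_2]) + … + OLA(D[C_p]). -/

import Mathlib

open Finset

variable {V : Type*} [Fintype V] [DecidableEq V]

/-- The set of the first `i` vertices in the vertex ordering `π`. -/
def prefixSet (π : V ≃ Fin (Fintype.card V)) (i : ℕ) : Finset V :=
  Finset.univ.filter (fun v => (π v : ℕ) < i)

/-- The set of the last `n - i` vertices in the vertex ordering `π`. -/
def suffixSet (π : V ≃ Fin (Fintype.card V)) (i : ℕ) : Finset V :=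
  Finset.univ.filter (fun v => i ≤ (π v : ℕ))

/-- The cut at position `i`: the arcs from outside the length-`i` prefix into the prefix. -/
def cutFinset (E : V → V → Prop) [DecidableRel E]
    (π : V ≃ Fin (Fintype.card V)) (i : ℕ) : Finset (V × V) :=
  Finset.univ.filter (fun p : V × V => E p.1 p.2 ∧ i ≤ (π p.1 : ℕ) ∧ (π p.2 : ℕ) < i)

/-- The size of the cut at position `i`. -/
def cutSize (E : V → V → Prop) [DecidableRel E]
    (π : V ≃ Fin (Fintype.card V)) (i : ℕ) : ℕ :=
  (cutFinset E π i).card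

/-- The width of a vertex ordering. -/
def widthOf (E : V → V → Prop) [DecidableRel E] (π : V ≃ Fin (Fintype.card V)) : ℕ :=
  (Finset.range (Fintype.card V + 1)).sup (cutSize E π)

/-- The cutwidth of a digraph. -/
noncomputable def cutwidth (E : V → V → Prop) [DecidableRel E] : ℕ :=
  sInf {w | ∃ π : V ≃ Fin (Fintype.card V), widthOf E π = w}

/-- The OLA-cost of a vertex ordering. -/
def olaOf (E : V → V → Prop) [DecidableRel E] (π : V ≃ Fin (Fintype.card V)) : ℕ :=
  ∑ i ∈ Finset.range (Fintype.card V + 1), cutSize E π i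

/-- The OLA-cost of a digraph. -/
noncomputable def ola (E : V → V → Prop) [DecidableRel E] : ℕ :=
  sInf {w | ∃ π : V ≃ Fin (Fintype.card V), olaOf E π = w}

/-- Two vertices are mutually reachable by directed paths. -/
def MutReach (E : V → V → Prop) (u v : V) : Prop :=
  Relation.ReflTransGen E u v ∧ Relation.ReflTransGen E v u

/-- The strongly connected component of a vertex `v`. -/
noncomputable def sccOf (E : V → V → Prop) (v : V) : Finset V :=
  @Finset.filter V (fun u => MutReach E u v) (Classical.decPred _) Finset.univ

/-- The set of strongly connected components of a digraph. -/
noncomputable def sccs (E : V → V → Prop) : Finset (Finset V) :=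
  Finset.univ.image (sccOf E)

/-- The OLA-cost of the subdigraph induced by a set `X` of vertices. -/
noncomputable def olaOn (E : V → V → Prop) [inst : DecidableRel E] (X : Finset V) : ℕ :=
  letI : DecidableRel (fun a b : {x // x ∈ X} => E a.1 b.1) := fun a b => inst a.1 b.1
  ola (fun a b : {x // x ∈ X} => E a.1 b.1)

set_option linter.unusedSectionVars false
set_option maxHeartbeats 1000000

lemma mutReach_refl (E : V → V → Prop) (v : V) : MutReach E v v :=
  ⟨Relation.ReflTransGen.refl, Relation.ReflTransGen.refl⟩

lemma mutReach_symm {E : V → V → Prop} {u v : V} (h : MutReach E u v) : MutReach E v u :=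
  ⟨h.2, h.1⟩

lemma mutReach_trans {E : V → V → Prop} {u v w : V} (h : MutReach E u v)
    (h' : MutReach E v w) : MutReach E u w :=
  ⟨h.1.trans h'.1, h'.2.trans h.2⟩

lemma mem_sccOf_iff {E : V → V → Prop} {u v : V} : u ∈ sccOf E v ↔ MutReach E u v := by
  simp [sccOf]

lemma self_mem_sccOf (E : V → V → Prop) (v : V) : v ∈ sccOf E v :=
  mem_sccOf_iff.2 (mutReach_refl E v)

lemma sccOf_eq_of_mutReach {E : V → V → Prop} {u v : V} (h : MutReach E u v) :
    sccOf E u = sccOf E v := by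
  ext w
  simp only [mem_sccOf_iff]
  exact ⟨fun hw => mutReach_trans hw h, fun hw => mutReach_trans hw (mutReach_symm h)⟩

lemma mutReach_of_sccOf_eq {E : V → V → Prop} {u v : V} (h : sccOf E u = sccOf E v) :
    MutReach E u v := mem_sccOf_iff.1 (h ▸ self_mem_sccOf E u)

lemma sccOf_mem_sccs (E : V → V → Prop) (v : V) : sccOf E v ∈ sccs E :=
  Finset.mem_image_of_mem _ (Finset.mem_univ v)

lemma eq_sccOf_of_mem {E : V → V → Prop} {C : Finset V} (hC : C ∈ sccs E) {x : V}
    (hx : x ∈ C) : C = sccOf E x := by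
  obtain ⟨w, -, rfl⟩ := Finset.mem_image.1 hC
  exact (sccOf_eq_of_mutReach (mem_sccOf_iff.1 hx)).symm

lemma sccs_nonempty_mem {E : V → V → Prop} {C : Finset V} (hC : C ∈ sccs E) :
    ∃ x, x ∈ C := by
  obtain ⟨w, -, rfl⟩ := Finset.mem_image.1 hC
  exact ⟨w, self_mem_sccOf E w⟩

noncomputable def intraArcs (E : V → V → Prop) [DecidableRel E] (C : Finset V) :
    Finset (V × V) :=
  @Finset.filter _ (fun p : V × V => E p.1 p.2 ∧ p.1 ∈ C ∧ p.2 ∈ C)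
    (Classical.decPred _) Finset.univ

lemma mem_intraArcs {E : V → V → Prop} [DecidableRel E] {C : Finset V} {p : V × V} :
    p ∈ intraArcs E C ↔ E p.1 p.2 ∧ p.1 ∈ C ∧ p.2 ∈ C := by
  simp [intraArcs]

lemma sum_intra (E : V → V → Prop) [DecidableRel E] (f : V × V → ℕ) :
    ∑ C ∈ sccs E, ∑ p ∈ intraArcs E C, f p
      = ∑ p ∈ @Finset.filter _
          (fun p : V × V => E p.1 p.2 ∧ sccOf E p.1 = sccOf E p.2)
          (Classical.decPred _) Finset.univ, f p := by
  classical
  rw [← Finset.sum_biUnion]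
  · apply Finset.sum_congr _ (fun _ _ => rfl)
    ext p
    simp only [Finset.mem_biUnion, mem_intraArcs, Finset.mem_filter, Finset.mem_univ, true_and]
    constructor
    · rintro ⟨C, hC, hE, h1, h2⟩
      exact ⟨hE, (eq_sccOf_of_mem hC h1).symm.trans (eq_sccOf_of_mem hC h2)⟩
    · rintro ⟨hE, h⟩
      exact ⟨sccOf E p.2, sccOf_mem_sccs E p.2, hE, h ▸ self_mem_sccOf E p.1, self_mem_sccOf E p.2⟩
  · intro C hC C' hC' hne
    simp only [Function.onFun]
    rw [Finset.disjoint_left]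
    intro p hp hp'
    rw [mem_intraArcs] at hp hp'
    exact hne (((eq_sccOf_of_mem hC hp.2.1).trans (eq_sccOf_of_mem hC' hp'.2.1).symm))

lemma diff_eq_card_filter {n : ℕ} (e : V ≃ Fin n) (a b : V) :
    (e a : ℕ) - (e b : ℕ)
      = (Finset.univ.filter fun w => (e b : ℕ) ≤ (e w : ℕ) ∧ (e w : ℕ) < (e a : ℕ)).card := by
  classical
  rw [← Nat.card_Ico (e b : ℕ) (e a : ℕ)]
  apply Finset.card_bij (fun k hk => e.symm ⟨k, lt_trans (Finset.mem_Ico.1 hk).2 (e a).isLt⟩)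
  · intro k hk
    simp only [Finset.mem_filter, Finset.mem_univ, true_and, Equiv.apply_symm_apply]
    exact Finset.mem_Ico.1 hk
  · intro k hk k' hk' h
    have := congrArg (fun x => ((e x : Fin n) : ℕ)) h
    simpa using this
  · intro w hw
    simp only [Finset.mem_filter, Finset.mem_univ, true_and] at hw
    refine ⟨(e w : ℕ), Finset.mem_Ico.2 hw, ?_⟩
    simp

lemma olaOf_eq_sum_arcs (E : V → V → Prop) [DecidableRel E] (π : V ≃ Fin (Fintype.card V)) :
    olaOf E π = ∑ p ∈ Finset.univ.filter (fun p : V × V => E p.1 p.2),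
      ((π p.1 : ℕ) - (π p.2 : ℕ)) := by
  classical
  unfold olaOf cutSize cutFinset
  have h1 : ∀ i, (Finset.univ.filter
      (fun p : V × V => E p.1 p.2 ∧ i ≤ (π p.1 : ℕ) ∧ (π p.2 : ℕ) < i)).card
      = ∑ p ∈ Finset.univ.filter (fun p : V × V => E p.1 p.2),
          (if i ≤ (π p.1 : ℕ) ∧ (π p.2 : ℕ) < i then 1 else 0) := by
    intro i
    rw [← Finset.filter_filter, Finset.card_filter]
  simp_rw [h1]
  rw [Finset.sum_comm]
  refine Finset.sum_congr rfl ?_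
  intro p hp
  rw [Finset.sum_ite, Finset.sum_const_zero, add_zero, Finset.sum_const, smul_eq_mul, mul_one]
  have : (Finset.range (Fintype.card V + 1)).filter
      (fun i => i ≤ (π p.1 : ℕ) ∧ (π p.2 : ℕ) < i) = Finset.Ioc (π p.2 : ℕ) (π p.1 : ℕ) := by
    ext i
    simp only [Finset.mem_filter, Finset.mem_range, Finset.mem_Ioc]
    constructor
    · rintro ⟨_, h2, h3⟩; exact ⟨h3, h2⟩
    · rintro ⟨h3, h2⟩
      exact ⟨lt_of_le_of_lt h2 (Nat.lt_succ_of_lt (π p.1).isLt), h2, h3⟩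
  rw [this, Nat.card_Ioc]

lemma olaOn_le_sum_intra (E : V → V → Prop) [inst : DecidableRel E]
    (π : V ≃ Fin (Fintype.card V)) (C : Finset V) :
    olaOn E C ≤ ∑ p ∈ intraArcs E C, ((π p.1 : ℕ) - (π p.2 : ℕ)) := by
  classical
  letI instE' : DecidableRel (fun a b : {x // x ∈ C} => E a.1 b.1) := fun a b => inst a.1 b.1
  letI : LinearOrder {x // x ∈ C} :=
    LinearOrder.lift' (fun a : {x // x ∈ C} => π a.1)
      (fun a b h => Subtype.ext (π.injective h))
  let σ : {x // x ∈ C} ≃o Fin (Fintype.card {x // x ∈ C}) :=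
    (Fintype.orderIsoFinOfCardEq _ rfl).symm
  have h1 : olaOn E C ≤ olaOf (fun a b : {x // x ∈ C} => E a.1 b.1) σ.toEquiv :=
    Nat.sInf_le ⟨σ.toEquiv, rfl⟩
  refine h1.trans ?_
  rw [olaOf_eq_sum_arcs]
  -- per-arc bound
  have key : ∀ a b : {x // x ∈ C},
      ((σ.toEquiv a : ℕ) - (σ.toEquiv b : ℕ)) ≤ ((π a.1 : ℕ) - (π b.1 : ℕ)) := by
    intro a b
    rw [diff_eq_card_filter σ.toEquiv a b, diff_eq_card_filter π a.1 b.1]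
    apply Finset.card_le_card_of_injOn (fun w => w.1)
    · intro w hw
      simp only [Finset.coe_filter, Set.mem_setOf_eq, Finset.mem_univ, true_and] at hw ⊢
      have h2 : ∀ x y : {x // x ∈ C}, (σ.toEquiv x : ℕ) ≤ (σ.toEquiv y : ℕ) ↔
          (π x.1 : ℕ) ≤ (π y.1 : ℕ) := by
        intro x y
        change (σ x : ℕ) ≤ (σ y : ℕ) ↔ _
        have : (σ x ≤ σ y) ↔ (x ≤ y) := σ.le_iff_le
        rw [Fin.le_def] at this
        rw [this]
        exact Iff.rfl
      constructor
      · exact (h2 b w).1 hw.1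
      · have hle := (h2 w a).1 hw.2.le
        have hne : w ≠ a := by
          intro h; subst h; exact absurd hw.2 (lt_irrefl _)
        have : (π w.1 : ℕ) ≠ (π a.1 : ℕ) := by
          intro h; exact hne (Subtype.ext (π.injective (Fin.ext h)))
        exact lt_of_le_of_ne hle this
    · intro x _ y _ h
      exact Subtype.ext h
  calc ∑ q ∈ Finset.univ.filter (fun q : {x // x ∈ C} × {x // x ∈ C} => E q.1.1 q.2.1),
        ((σ.toEquiv q.1 : ℕ) - (σ.toEquiv q.2 : ℕ))
      ≤ ∑ q ∈ Finset.univ.filter (fun q : {x // x ∈ C} × {x // x ∈ C} => E q.1.1 q.2.1),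
        ((π q.1.1 : ℕ) - (π q.2.1 : ℕ)) := Finset.sum_le_sum (fun q _ => key q.1 q.2)
    _ = ∑ p ∈ intraArcs E C, ((π p.1 : ℕ) - (π p.2 : ℕ)) := by
        refine Finset.sum_bij' (fun q _ => ((q.1.1 : V), (q.2.1 : V)))
          (fun p hp => (⟨p.1, (mem_intraArcs.1 hp).2.1⟩, ⟨p.2, (mem_intraArcs.1 hp).2.2⟩))
          ?_ ?_ ?_ ?_ ?_
        · intro q hq
          simp only [Finset.mem_filter, Finset.mem_univ, true_and] at hq
          exact mem_intraArcs.2 ⟨hq, q.1.2, q.2.2⟩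
        · intro p hp
          simp only [Finset.mem_filter, Finset.mem_univ, true_and]
          exact (mem_intraArcs.1 hp).1
        · intro q hq; rfl
        · intro p hp; rfl
        · intro q hq; rfl


lemma sum_sccs_le_olaOf (E : V → V → Prop) [DecidableRel E] (π : V ≃ Fin (Fintype.card V)) :
    ∑ C ∈ sccs E, olaOn E C ≤ olaOf E π := by
  classical
  calc ∑ C ∈ sccs E, olaOn E C
      ≤ ∑ C ∈ sccs E, ∑ p ∈ intraArcs E C, ((π p.1 : ℕ) - (π p.2 : ℕ)) :=
        Finset.sum_le_sum (fun C _ => olaOn_le_sum_intra E π C)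
    _ = ∑ p ∈ @Finset.filter _
          (fun p : V × V => E p.1 p.2 ∧ sccOf E p.1 = sccOf E p.2)
          (Classical.decPred _) Finset.univ, ((π p.1 : ℕ) - (π p.2 : ℕ)) :=
        sum_intra E _
    _ ≤ ∑ p ∈ Finset.univ.filter (fun p : V × V => E p.1 p.2), ((π p.1 : ℕ) - (π p.2 : ℕ)) := by
        apply Finset.sum_le_sum_of_subset
        intro p hp
        simp only [Finset.mem_filter, Finset.mem_univ, true_and] at hp ⊢
        exact hp.1
    _ = olaOf E π := (olaOf_eq_sum_arcs E π).symm

structure SccT (E : V → V → Prop) : Type _ where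
  C : Finset V
  mem : C ∈ sccs E

lemma SccT.ext' {E : V → V → Prop} {A B : SccT E} (h : A.C = B.C) : A = B := by
  cases A; cases B; simpa using h

instance sccPartialOrder (E : V → V → Prop) : PartialOrder (SccT E) where
  le A B := A = B ∨ ∃ u ∈ A.C, ∃ v ∈ B.C, Relation.ReflTransGen E u v
  le_refl A := Or.inl rfl
  le_trans := by
    rintro A B F (rfl | ⟨u, hu, v, hv, huv⟩) h2
    · exact h2
    rcases h2 with rfl | ⟨u', hu', v', hv', h'⟩
    · exact Or.inr ⟨u, hu, v, hv, huv⟩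
    · refine Or.inr ⟨u, hu, v', hv', huv.trans ?_⟩
      have hD : B.C = sccOf E v := eq_sccOf_of_mem B.mem hv
      have : MutReach E u' v := mem_sccOf_iff.1 (hD ▸ hu')
      exact this.2.trans h'
  le_antisymm := by
    rintro A B (rfl | ⟨u, hu, v, hv, huv⟩) h2
    · rfl
    rcases h2 with rfl | ⟨u', hu', v', hv', h'⟩
    · rfl
    · have hD : B.C = sccOf E v := eq_sccOf_of_mem B.mem hv
      have hC : A.C = sccOf E u := eq_sccOf_of_mem A.mem hu
      have h3 : MutReach E u' v := mem_sccOf_iff.1 (hD ▸ hu')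
      have h4 : MutReach E v' u := mem_sccOf_iff.1 (hC ▸ hv')
      have hmut : MutReach E u v := ⟨huv, h3.2.trans (h'.trans h4.1)⟩
      exact SccT.ext' (hC.trans ((sccOf_eq_of_mutReach hmut).trans hD.symm))

lemma exists_olaOf_eq_sum (E : V → V → Prop) [inst : DecidableRel E] :
    ∃ π : V ≃ Fin (Fintype.card V), olaOf E π = ∑ C ∈ sccs E, olaOn E C := by
  classical
  -- choose an optimal ordering of each induced subdigraph
  have opt : ∀ C : Finset V,
      ∃ τ : {x // x ∈ C} ≃ Fin (Fintype.card {x // x ∈ C}),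
        (letI : DecidableRel (fun a b : {x // x ∈ C} => E a.1 b.1) := fun a b => inst a.1 b.1
         olaOf (fun a b : {x // x ∈ C} => E a.1 b.1) τ) = olaOn E C := by
    intro C
    letI : DecidableRel (fun a b : {x // x ∈ C} => E a.1 b.1) := fun a b => inst a.1 b.1
    have h := Nat.sInf_mem (s := {w | ∃ τ : {x // x ∈ C} ≃ Fin (Fintype.card {x // x ∈ C}),
      olaOf (fun a b : {x // x ∈ C} => E a.1 b.1) τ = w}) ⟨_, Fintype.equivFin _, rfl⟩
    exact h
  choose τ hτ using opt
  have τcast : ∀ (C C' : Finset V) (h : C = C') (x : V) (hx : x ∈ C) (hx' : x ∈ C'),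
      (τ C ⟨x, hx⟩ : ℕ) = (τ C' ⟨x, hx'⟩ : ℕ) := by
    intro C C' h x hx hx'; subst h; rfl
  let L := LinearExtension (SccT E)
  let ℓ : SccT E → L := toLinearExtension
  have ℓmono : ∀ {A B : SccT E}, A ≤ B → ℓ A ≤ ℓ B := fun h => toLinearExtension.monotone' h
  have ℓinj : Function.Injective ℓ := fun a b h => h
  -- the key
  let key : V → Lex (L × ℕ) := fun v =>
    toLex (ℓ ⟨sccOf E v, sccOf_mem_sccs E v⟩, (τ (sccOf E v) ⟨v, self_mem_sccOf E v⟩ : ℕ))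
  have keyinj : Function.Injective key := by
    intro u v h
    have h1 : ℓ ⟨sccOf E u, sccOf_mem_sccs E u⟩ = ℓ ⟨sccOf E v, sccOf_mem_sccs E v⟩ :=
      congrArg (fun p => (ofLex p).1) h
    have hscc : sccOf E u = sccOf E v := congrArg SccT.C (ℓinj h1)
    have h2 : (τ (sccOf E u) ⟨u, self_mem_sccOf E u⟩ : ℕ)
        = (τ (sccOf E v) ⟨v, self_mem_sccOf E v⟩ : ℕ) := congrArg (fun p => (ofLex p).2) h
    rw [τcast (sccOf E u) (sccOf E v) hscc u (self_mem_sccOf E u)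
      (hscc ▸ self_mem_sccOf E u)] at h2
    exact congrArg Subtype.val ((τ (sccOf E v)).injective (Fin.ext h2))
  letI : LinearOrder V := LinearOrder.lift' key keyinj
  let ρ : V ≃o Fin (Fintype.card V) := (Fintype.orderIsoFinOfCardEq V rfl).symm
  have hle : ∀ x y : V, x ≤ y ↔ key x ≤ key y := fun _ _ => Iff.rfl
  have hlt : ∀ x y : V, x < y ↔ key x < key y := by
    intro x y
    rw [lt_iff_le_not_ge, lt_iff_le_not_ge, hle, hle]
  have hρle : ∀ x y : V, (ρ.toEquiv x : ℕ) ≤ (ρ.toEquiv y : ℕ) ↔ key x ≤ key y := by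
    intro x y
    change (ρ x : ℕ) ≤ (ρ y : ℕ) ↔ _
    rw [← Fin.le_def, ρ.le_iff_le, hle]
  have hρlt : ∀ x y : V, (ρ.toEquiv x : ℕ) < (ρ.toEquiv y : ℕ) ↔ key x < key y := by
    intro x y
    change (ρ x : ℕ) < (ρ y : ℕ) ↔ _
    rw [← Fin.lt_def, ρ.lt_iff_lt, hlt]
  refine ⟨ρ.toEquiv, ?_⟩
  rw [olaOf_eq_sum_arcs]
  set f : V × V → ℕ := fun p => (ρ.toEquiv p.1 : ℕ) - (ρ.toEquiv p.2 : ℕ) with hf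
  -- inter-scc arcs contribute zero
  have hsame : ∑ p ∈ Finset.univ.filter (fun p : V × V => E p.1 p.2), f p
      = ∑ p ∈ @Finset.filter _
          (fun p : V × V => E p.1 p.2 ∧ sccOf E p.1 = sccOf E p.2)
          (Classical.decPred _) Finset.univ, f p := by
    rw [← Finset.sum_filter_add_sum_filter_not
      (Finset.univ.filter (fun p : V × V => E p.1 p.2))
      (fun p : V × V => sccOf E p.1 = sccOf E p.2) f]
    have hz : ∑ p ∈ (Finset.univ.filter (fun p : V × V => E p.1 p.2)).filter
        (fun p : V × V => ¬ sccOf E p.1 = sccOf E p.2), f p = 0 := by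
      apply Finset.sum_eq_zero
      intro p hp
      simp only [Finset.mem_filter, Finset.mem_univ, true_and] at hp
      obtain ⟨hE, hne⟩ := hp
      have hSle : (⟨sccOf E p.1, sccOf_mem_sccs E p.1⟩ : SccT E)
          ≤ ⟨sccOf E p.2, sccOf_mem_sccs E p.2⟩ :=
        Or.inr ⟨p.1, self_mem_sccOf E p.1, p.2, self_mem_sccOf E p.2,
          Relation.ReflTransGen.single hE⟩
      have hSlt : (⟨sccOf E p.1, sccOf_mem_sccs E p.1⟩ : SccT E)
          < ⟨sccOf E p.2, sccOf_mem_sccs E p.2⟩ :=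
        lt_of_le_of_ne hSle (fun h => hne (congrArg SccT.C h))
      have hLlt : ℓ ⟨sccOf E p.1, sccOf_mem_sccs E p.1⟩ < ℓ ⟨sccOf E p.2, sccOf_mem_sccs E p.2⟩ :=
        lt_of_le_of_ne (ℓmono hSlt.le) (fun h => hSlt.ne (ℓinj h))
      have hkey : key p.1 < key p.2 := by
        rw [Prod.Lex.lt_iff]
        exact Or.inl hLlt
      have : (ρ.toEquiv p.1 : ℕ) < (ρ.toEquiv p.2 : ℕ) := (hρlt p.1 p.2).2 hkey
      simpa [hf] using Nat.sub_eq_zero_of_le this.le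
    rw [hz, add_zero, Finset.filter_filter]
    apply Finset.sum_congr _ (fun _ _ => rfl)
    ext p
    simp
  rw [hsame, ← sum_intra E f]
  -- per-component equality
  apply Finset.sum_congr rfl
  intro C hC
  letI instE' : DecidableRel (fun a b : {x // x ∈ C} => E a.1 b.1) := fun a b => inst a.1 b.1
  -- key comparisons within a component
  have hkey_between : ∀ (a b : {x // x ∈ C}) (w : V),
      (key b.1 ≤ key w ∧ key w < key a.1)
        ↔ ∃ hw : w ∈ C, (τ C b : ℕ) ≤ (τ C ⟨w, hw⟩ : ℕ) ∧ (τ C ⟨w, hw⟩ : ℕ) < (τ C a : ℕ) := by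
    intro a b w
    have hCa : C = sccOf E a.1 := eq_sccOf_of_mem hC a.2
    have hCb : C = sccOf E b.1 := eq_sccOf_of_mem hC b.2
    have hBA : (⟨sccOf E b.1, sccOf_mem_sccs E b.1⟩ : SccT E)
        = ⟨sccOf E a.1, sccOf_mem_sccs E a.1⟩ := SccT.ext' (hCb.symm.trans hCa)
    have hτb : (τ (sccOf E b.1) ⟨b.1, self_mem_sccOf E b.1⟩ : ℕ) = (τ C b : ℕ) := by
      rw [τcast (sccOf E b.1) C hCb.symm b.1 (self_mem_sccOf E b.1) b.2]
    have hτa : (τ (sccOf E a.1) ⟨a.1, self_mem_sccOf E a.1⟩ : ℕ) = (τ C a : ℕ) := by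
      rw [τcast (sccOf E a.1) C hCa.symm a.1 (self_mem_sccOf E a.1) a.2]
    constructor
    · rintro ⟨h1, h2⟩
      rw [show key b.1 ≤ key w ↔ _ from Prod.Lex.toLex_le_toLex] at h1
      rw [show key w < key a.1 ↔ _ from Prod.Lex.toLex_lt_toLex] at h2
      have hWA : ℓ ⟨sccOf E w, sccOf_mem_sccs E w⟩ = ℓ ⟨sccOf E a.1, sccOf_mem_sccs E a.1⟩ := by
        rcases h1 with h1 | ⟨h1, -⟩ <;> rcases h2 with h2 | ⟨h2, -⟩
        · exact absurd ((congrArg ℓ hBA ▸ h1).trans h2) (lt_irrefl _)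
        · exact absurd (h2 ▸ (congrArg ℓ hBA ▸ h1)) (lt_irrefl _)
        · exact absurd (h1 ▸ h2) (by rw [congrArg ℓ hBA]; exact lt_irrefl _)
        · exact h2
      have hsccw : sccOf E w = C := (congrArg SccT.C (ℓinj hWA)).trans hCa.symm
      have hw : w ∈ C := hsccw ▸ self_mem_sccOf E w
      have hτw : (τ (sccOf E w) ⟨w, self_mem_sccOf E w⟩ : ℕ) = (τ C ⟨w, hw⟩ : ℕ) :=
        τcast (sccOf E w) C hsccw w (self_mem_sccOf E w) hw
      refine ⟨hw, ?_, ?_⟩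
      · rcases h1 with h1 | ⟨-, h1⟩
        · exact absurd (congrArg ℓ hBA ▸ h1 : ℓ _ < ℓ _) (by rw [hWA, ← congrArg ℓ hBA]; exact lt_irrefl _)
        · rw [← hτb, ← hτw]; exact h1
      · rcases h2 with h2 | ⟨-, h2⟩
        · exact absurd (hWA ▸ h2) (lt_irrefl _)
        · rw [← hτa, ← hτw]; exact h2
    · rintro ⟨hw, hle1, hlt1⟩
      have hsccw : sccOf E w = C := (eq_sccOf_of_mem hC hw).symm
      have hτw : (τ (sccOf E w) ⟨w, self_mem_sccOf E w⟩ : ℕ) = (τ C ⟨w, hw⟩ : ℕ) :=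
        τcast (sccOf E w) C hsccw w (self_mem_sccOf E w) hw
      have hWB : (⟨sccOf E w, sccOf_mem_sccs E w⟩ : SccT E)
          = ⟨sccOf E b.1, sccOf_mem_sccs E b.1⟩ := SccT.ext' (hsccw.trans hCb)
      have hWA' : (⟨sccOf E w, sccOf_mem_sccs E w⟩ : SccT E)
          = ⟨sccOf E a.1, sccOf_mem_sccs E a.1⟩ := SccT.ext' (hsccw.trans hCa)
      constructor
      · rw [show key b.1 ≤ key w ↔ _ from Prod.Lex.toLex_le_toLex]
        refine Or.inr ⟨(congrArg ℓ hWB).symm, ?_⟩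
        rw [hτb, hτw]; exact hle1
      · rw [show key w < key a.1 ↔ _ from Prod.Lex.toLex_lt_toLex]
        refine Or.inr ⟨congrArg ℓ hWA', ?_⟩
        rw [hτw, hτa]; exact hlt1
  -- per-arc equality within C
  have harc : ∀ a b : {x // x ∈ C}, f (a.1, b.1) = (τ C a : ℕ) - (τ C b : ℕ) := by
    intro a b
    rw [hf]
    simp only
    rw [diff_eq_card_filter ρ.toEquiv a.1 b.1, diff_eq_card_filter (τ C) a b]
    rw [show (Finset.univ.filter fun w : V =>
        (ρ.toEquiv b.1 : ℕ) ≤ (ρ.toEquiv w : ℕ) ∧ (ρ.toEquiv w : ℕ) < (ρ.toEquiv a.1 : ℕ))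
        = (Finset.univ.filter fun w : {x // x ∈ C} =>
            (τ C b : ℕ) ≤ (τ C w : ℕ) ∧ (τ C w : ℕ) < (τ C a : ℕ)).image Subtype.val from ?_]
    · rw [Finset.card_image_of_injective _ Subtype.val_injective]
    · ext w
      simp only [Finset.mem_filter, Finset.mem_univ, true_and, Finset.mem_image]
      rw [hρle, hρlt, hkey_between a b w]
      constructor
      · rintro ⟨hw, h1, h2⟩
        exact ⟨⟨w, hw⟩, ⟨h1, h2⟩, rfl⟩
      · rintro ⟨w', ⟨h1, h2⟩, rfl⟩
        exact ⟨w'.2, h1, h2⟩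
  -- conclude for the component C
  have hsum : ∑ p ∈ intraArcs E C, f p
      = ∑ q ∈ Finset.univ.filter (fun q : {x // x ∈ C} × {x // x ∈ C} => E q.1.1 q.2.1),
          ((τ C q.1 : ℕ) - (τ C q.2 : ℕ)) := by
    refine (Finset.sum_bij' (fun p hp => ((⟨p.1, (mem_intraArcs.1 hp).2.1⟩ : {x // x ∈ C}),
        (⟨p.2, (mem_intraArcs.1 hp).2.2⟩ : {x // x ∈ C})))
      (fun q _ => ((q.1.1 : V), (q.2.1 : V))) ?_ ?_ ?_ ?_ ?_)
    · intro p hp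
      simp only [Finset.mem_filter, Finset.mem_univ, true_and]
      exact (mem_intraArcs.1 hp).1
    · intro q hq
      simp only [Finset.mem_filter, Finset.mem_univ, true_and] at hq
      exact mem_intraArcs.2 ⟨hq, q.1.2, q.2.2⟩
    · intro p hp; rfl
    · intro q hq; rfl
    · intro p hp
      exact harc ⟨p.1, (mem_intraArcs.1 hp).2.1⟩ ⟨p.2, (mem_intraArcs.1 hp).2.2⟩
  rw [hsum, ← olaOf_eq_sum_arcs (fun a b : {x // x ∈ C} => E a.1 b.1) (τ C)]
  exact hτ C

/-- The OLA-cost of a finite simple digraph is the sum of the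
OLA-costs of the subdigraphs induced by its strongly connected components. -/
theorem ola_eq_sum_sccs (E : V → V → Prop) [DecidableRel E]
    (hirr : ∀ v : V, ¬ E v v) :
    ola E = ∑ C ∈ sccs E, olaOn E C := by
  classical
  apply le_antisymm
  · obtain ⟨π, hπ⟩ := exists_olaOf_eq_sum E
    calc ola E ≤ olaOf E π := Nat.sInf_le ⟨π, rfl⟩
      _ = _ := hπ
  · obtain ⟨π, hπ⟩ := Nat.sInf_mem
      (s := {w | ∃ π : V ≃ Fin (Fintype.card V), olaOf E π = w}) ⟨_, Fintype.equivFin V, rfl⟩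
    calc ∑ C ∈ sccs E, olaOn E C ≤ olaOf E π := sum_sccs_le_olaOf E π
      _ = ola E := hπ
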